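/- Let s = (s_n) be a directive sequence of non-erasing substitutions on the finite alphabet A = {0,…,d} which is primitive, i.e. for every k there exists n ≥ k such that for every letter a the word s_k∘s_{k+1}∘⋯∘s_{n−1}(a) contains every letter of A. Let Ω_s be the set of infinite words w : ℕ → A all of whose finite factors belong to the language L of all factors of the finite words s_0∘⋯∘s_{n−1}(a), n ∈ ℕ, a ∈ A. Then for all w, w′ ∈ Ω_s, every finite prefix of w is a factor of w′ (in particular the subshift Ω_s is minimal). -/

import Mathlib

/-- Apply a substitution to a finite word by concatenating the images of its letters. -/
def subApply {d : ℕ} (σ : Fin (d + 1) → List (Fin (d + 1)))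
    (w : List (Fin (d + 1))) : List (Fin (d + 1)) :=
  w.flatMap σ

/-- `applySeq s k n w = s_k (s_{k+1} (⋯ (s_{n-1} w)))`, the composition
`s_k ∘ s_{k+1} ∘ ⋯ ∘ s_{n-1}` applied to the word `w`. -/
def applySeq {d : ℕ} (s : ℕ → Fin (d + 1) → List (Fin (d + 1))) (k n : ℕ)
    (w : List (Fin (d + 1))) : List (Fin (d + 1)) :=
  (List.range' k (n - k)).foldr (fun i acc => subApply (s i) acc) w

/-- `l` is a factor (contiguous finite subword) of the infinite word `w`. -/
def IsFactorOf {d : ℕ} (l : List (Fin (d + 1))) (w : ℕ → Fin (d + 1)) : Prop :=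
  ∃ i : ℕ, l = (List.range l.length).map (fun j => w (i + j))

section Aux

variable {d : ℕ} {s : ℕ → Fin (d + 1) → List (Fin (d + 1))}

lemma subApply_append (σ : Fin (d + 1) → List (Fin (d + 1))) (u v : List (Fin (d + 1))) :
    subApply σ (u ++ v) = subApply σ u ++ subApply σ v := by
  simp [subApply]

lemma applySeq_append (k n : ℕ) (u v : List (Fin (d + 1))) :
    applySeq s k n (u ++ v) = applySeq s k n u ++ applySeq s k n v := by
  unfold applySeq
  induction (List.range' k (n - k)) with
  | nil => simp
  | cons i L ih => simp only [List.foldr_cons, ih, subApply_append]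

lemma applySeq_nil (k n : ℕ) : applySeq s k n ([] : List (Fin (d + 1))) = [] := by
  unfold applySeq
  induction (List.range' k (n - k)) with
  | nil => rfl
  | cons i L ih => simp only [List.foldr_cons, ih]; rfl

lemma applySeq_flatMap (k n : ℕ) (v : List (Fin (d + 1))) :
    applySeq s k n v = v.flatMap (fun a => applySeq s k n [a]) := by
  induction v with
  | nil => simp [applySeq_nil]
  | cons a t ih =>
    have : (a :: t) = [a] ++ t := rfl
    rw [this, applySeq_append, ih]
    simp

lemma applySeq_ne_nil (hne : ∀ n a, s n a ≠ []) {w : List (Fin (d + 1))}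
    (hw : w ≠ []) (k n : ℕ) : applySeq s k n w ≠ [] := by
  unfold applySeq
  induction (List.range' k (n - k)) with
  | nil => exact hw
  | cons i L ih =>
    simp only [List.foldr_cons]
    intro h
    rcases hz : List.foldr (fun i acc => subApply (s i) acc) w L with _ | ⟨a, t⟩
    · exact ih hz
    · rw [hz] at h
      simp only [subApply, List.flatMap_cons] at h
      exact hne i a (by
        rcases List.append_eq_nil_iff.mp h with ⟨h1, _⟩
        exact h1)

lemma applySeq_comp (k n m : ℕ) (hkn : k ≤ n) (hnm : n ≤ m) (w : List (Fin (d + 1))) :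
    applySeq s k m w = applySeq s k n (applySeq s n m w) := by
  unfold applySeq
  have h1 : m - k = (m - n) + (n - k) := by omega
  have h2 : k + 1 * (n - k) = n := by omega
  rw [h1, Nat.add_comm (m - n) (n - k), ← @List.range'_append k (n - k) (m - n) 1, List.foldr_append, h2]

lemma applySeq_infix_of_mem {a : Fin (d + 1)} {v : List (Fin (d + 1))} (h : a ∈ v) (k n : ℕ) :
    applySeq s k n [a] <:+: applySeq s k n v := by
  obtain ⟨v1, v2, rfl⟩ := List.append_of_mem h
  have hv : v1 ++ a :: v2 = v1 ++ [a] ++ v2 := by simp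
  rw [hv, applySeq_append, applySeq_append]
  exact ⟨applySeq s k n v1, applySeq s k n v2, rfl⟩

lemma prim_step (hd : 1 ≤ d)
    (hprim : ∀ k : ℕ, ∃ n : ℕ, k ≤ n ∧ ∀ a b : Fin (d + 1), b ∈ applySeq s k n [a])
    (M : ℕ) :
    ∃ N, M < N ∧ ∀ c b : Fin (d + 1), applySeq s 0 M [c] <:+: applySeq s 0 N [b] := by
  obtain ⟨N, hMN, hall⟩ := hprim M
  have hlt : M < N := by
    rcases Nat.lt_or_ge M N with h | h
    · exact h
    · exfalso
      have hMN' : N = M := le_antisymm h hMN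
      subst hMN'
      have heq : applySeq s N N [(0 : Fin (d + 1))] = [(0 : Fin (d + 1))] := by
        unfold applySeq
        simp
      have h1 := hall 0 1
      rw [heq] at h1
      simp only [List.mem_singleton] at h1
      have : (1 : Fin (d + 1)).val = (0 : Fin (d + 1)).val := by rw [h1]
      have hv : (1 : Fin (d + 1)).val = 1 := by
        rw [Fin.val_one']
        exact Nat.mod_eq_of_lt (by omega)
      rw [hv, Fin.val_zero] at this
      exact one_ne_zero this
  refine ⟨N, hlt, fun c b => ?_⟩
  rw [applySeq_comp 0 M N (Nat.zero_le M) hMN]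
  exact applySeq_infix_of_mem (hall b c) 0 M

lemma prim_bump (hd : 1 ≤ d)
    (hprim : ∀ k : ℕ, ∃ n : ℕ, k ≤ n ∧ ∀ a b : Fin (d + 1), b ∈ applySeq s k n [a])
    (T M : ℕ) :
    ∃ N, T ≤ N ∧ ∀ c b : Fin (d + 1), applySeq s 0 M [c] <:+: applySeq s 0 N [b] := by
  induction T with
  | zero =>
    obtain ⟨N, _, h⟩ := prim_step hd hprim M
    exact ⟨N, Nat.zero_le _, h⟩
  | succ T ih =>
    obtain ⟨N, hTN, hN⟩ := ih
    obtain ⟨N', hlt, hN'⟩ := prim_step hd hprim N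
    exact ⟨N', by omega, fun c b => (hN c 0).trans (hN' 0 b)⟩

/-- If a sufficiently long word is an infix of a concatenation of blocks of length ≤ K,
it contains a full block. -/
lemma block_lemma {α β : Type*} (g : β → List α) (K : ℕ) (hK : 1 ≤ K)
    (hne : ∀ b, g b ≠ []) (hlen : ∀ b, (g b).length ≤ K) :
    ∀ (v : List β) (u : List α), u <:+: v.flatMap g → 2 * K ≤ u.length + 1 →
      ∃ b ∈ v, g b <:+: u := by
  intro v
  induction v with
  | nil =>
    intro u hinf hlu
    rw [List.flatMap_nil, List.infix_nil] at hinf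
    subst hinf
    simp at hlu
    omega
  | cons b v' ih =>
    intro u hinf hlu
    obtain ⟨x, y, hxy⟩ := hinf
    by_cases hx : (g b).length ≤ x.length
    · -- u lies entirely past the first block
      have hxpre : x <+: g b ++ v'.flatMap g := ⟨u ++ y, by simpa using hxy⟩
      have hgpre : g b <+: g b ++ v'.flatMap g := ⟨v'.flatMap g, rfl⟩
      have : g b <+: x := List.prefix_of_prefix_length_le hgpre hxpre hx
      obtain ⟨x', rfl⟩ := this
      have hcancel : x' ++ u ++ y = v'.flatMap g := by
        have := hxy
        rw [List.flatMap_cons] at this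
        simp only [List.append_assoc] at this ⊢
        exact List.append_cancel_left this
      obtain ⟨b', hb', hgb'⟩ := ih u ⟨x', y, hcancel⟩ hlu
      exact ⟨b', List.mem_cons_of_mem _ hb', hgb'⟩
    · push_neg at hx
      by_cases hx0 : x = []
      · -- u starts at the beginning; the first block is a prefix of u
        subst hx0
        have hupre : u <+: g b ++ v'.flatMap g := ⟨y, by simpa using hxy⟩
        have hgpre : g b <+: g b ++ v'.flatMap g := ⟨v'.flatMap g, rfl⟩
        have hlen' : (g b).length ≤ u.length := by
          have := hlen b
          omega
        exact ⟨b, List.mem_cons_self, (List.prefix_of_prefix_length_le hgpre hupre hlen').isInfix⟩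
      · -- u starts strictly inside the first block; the second block is inside u
        have hx1 : 1 ≤ x.length := by
          rcases x with _ | _
          · exact absurd rfl hx0
          · simp
        rcases v' with _ | ⟨b', v''⟩
        · -- impossible by lengths
          exfalso
          rw [List.flatMap_cons, List.flatMap_nil, List.append_nil] at hxy
          have := congrArg List.length hxy
          simp only [List.length_append] at this
          have := hlen b
          omega
        · rw [List.flatMap_cons, List.flatMap_cons] at hxy
          -- hxy : x ++ u ++ y = g b ++ (g b' ++ flatMap g v'')
          have hxpre : x <+: g b ++ (g b' ++ v''.flatMap g) := ⟨u ++ y, by simpa using hxy⟩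
          have hgpre : g b <+: g b ++ (g b' ++ v''.flatMap g) := ⟨g b' ++ v''.flatMap g, rfl⟩
          have hxgb : x <+: g b := List.prefix_of_prefix_length_le hxpre hgpre (le_of_lt hx)
          obtain ⟨t, hgbt⟩ := hxgb
          have hcancel : u ++ y = t ++ (g b' ++ v''.flatMap g) := by
            have hcc : x ++ (u ++ y) = x ++ (t ++ (g b' ++ v''.flatMap g)) := by
              calc x ++ (u ++ y) = x ++ u ++ y := by rw [List.append_assoc]
                _ = g b ++ (g b' ++ v''.flatMap g) := hxy
                _ = x ++ (t ++ (g b' ++ v''.flatMap g)) := by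
                    rw [← hgbt, List.append_assoc]
            exact List.append_cancel_left hcc
          have htlen : t.length = (g b).length - x.length := by
            have := congrArg List.length hgbt
            simp only [List.length_append] at this
            omega
          have hkey : (t ++ g b').length ≤ u.length := by
            simp only [List.length_append]
            have h1 := hlen b
            have h2 := hlen b'
            omega
          have htpre : t ++ g b' <+: u ++ y := by
            refine ⟨v''.flatMap g, ?_⟩
            rw [hcancel]
            simp [List.append_assoc]
          have hupre : u <+: u ++ y := ⟨y, rfl⟩
          have : t ++ g b' <+: u := List.prefix_of_prefix_length_le htpre hupre hkey
          obtain ⟨z, hz⟩ := this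
          exact ⟨b', List.mem_cons_of_mem _ (List.mem_cons_self),
            ⟨t, z, by rw [← hz]⟩⟩

lemma isFactorOf_of_infix {l u : List (Fin (d + 1))} {w : ℕ → Fin (d + 1)}
    (h : IsFactorOf u w) (hlu : l <:+: u) : IsFactorOf l w := by
  obtain ⟨i, hu⟩ := h
  obtain ⟨x, y, hxy⟩ := hlu
  refine ⟨i + x.length, ?_⟩
  have hlenu : u.length = x.length + (l.length + y.length) := by
    rw [← hxy]; simp only [List.length_append]; omega
  rw [hlenu, List.range_add, List.map_append, List.map_map] at hu
  have hx1 : x ++ (l ++ y) = (List.range x.length).map (fun j => w (i + j)) ++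
      (List.range (l.length + y.length)).map ((fun j => w (i + j)) ∘ (fun j => x.length + j)) := by
    rw [← hu, ← hxy, List.append_assoc]
  have h1 := List.append_inj hx1 (by simp)
  have h2 : l ++ y = (List.range (l.length + y.length)).map
      ((fun j => w (i + j)) ∘ (fun j => x.length + j)) := h1.2
  rw [List.range_add, List.map_append, List.map_map] at h2
  have h3 := List.append_inj h2 (by simp)
  have h4 := h3.1
  rw [h4]
  simp only [List.length_map, List.length_range]
  apply List.map_congr_left
  intro j hj
  simp only [Function.comp_apply]
  congr 1
  omega

end Aux

/-- If the directive sequence `s` of non-erasing substitutions is primitive, then any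
prefix of any element of the `S`-adic subshift `Ω_s` is a factor of any other element
(in particular, `Ω_s` is minimal). -/
theorem prefix_isFactor_of_mem_primitive_Sadic_subshift {d : ℕ} (hd : 1 ≤ d)
    (s : ℕ → Fin (d + 1) → List (Fin (d + 1)))
    (hne : ∀ n a, s n a ≠ [])
    (hprim : ∀ k : ℕ, ∃ n : ℕ, k ≤ n ∧ ∀ a b : Fin (d + 1), b ∈ applySeq s k n [a])
    (Ω : Set (ℕ → Fin (d + 1)))
    (hΩ : Ω = {w | ∀ l : List (Fin (d + 1)), IsFactorOf l w →
      ∃ n : ℕ, ∃ a : Fin (d + 1), l <:+: applySeq s 0 n [a]}) :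
    ∀ w ∈ Ω, ∀ w' ∈ Ω, ∀ m : ℕ,
      IsFactorOf ((List.range m).map w) w' := by
  subst hΩ
  intro w hw w' hw' m
  set l : List (Fin (d + 1)) := (List.range m).map w with hl
  have hlf : IsFactorOf l w := ⟨0, by simp [hl]⟩
  obtain ⟨n, a, hla⟩ := hw l hlf
  obtain ⟨N₀, _, hstep⟩ := prim_step (s := s) hd hprim n
  set N := N₀ with hNdef
  have hN : ∀ b : Fin (d + 1), l <:+: applySeq s 0 N [b] :=
    fun b => hla.trans (hstep a b)
  set g : Fin (d + 1) → List (Fin (d + 1)) := fun b => applySeq s 0 N [b] with hg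
  set K : ℕ := Finset.univ.sup (fun b : Fin (d + 1) => (g b).length) with hKdef
  have hgne : ∀ b, g b ≠ [] := fun b => applySeq_ne_nil hne (by simp) 0 N
  have hglen : ∀ b, (g b).length ≤ K :=
    fun b => Finset.le_sup (f := fun b : Fin (d + 1) => (g b).length) (Finset.mem_univ b)
  have hK1 : 1 ≤ K := by
    have h0 : 1 ≤ (g 0).length := List.length_pos_iff.mpr (hgne 0)
    exact le_trans h0 (hglen 0)
  set u : List (Fin (d + 1)) := (List.range (2 * K)).map w' with hu
  have huf : IsFactorOf u w' := ⟨0, by simp [hu]⟩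
  obtain ⟨M, c, huc⟩ := hw' u huf
  obtain ⟨M', hM', hbump⟩ := prim_bump (s := s) hd hprim N M
  have huM' : u <:+: applySeq s 0 M' [0] := huc.trans (hbump c 0)
  have hdecomp : applySeq s 0 M' [(0 : Fin (d + 1))] = (applySeq s N M' [0]).flatMap g := by
    rw [applySeq_comp 0 N M' (Nat.zero_le N) hM', applySeq_flatMap]
  rw [hdecomp] at huM'
  have hulen : 2 * K ≤ u.length + 1 := by simp [hu]
  obtain ⟨b, _, hgb⟩ := block_lemma g K hK1 hgne hglen _ u huM' hulen
  have hlu : l <:+: u := (hN b).trans hgb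
  exact isFactorOf_of_infix huf hlu
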